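/- For every integer n ≥ 6, there is no element v of the standard family Fₙ such that the number of elements w of Fₙ with δ(v, w) = 1 equals n − 1; indeed, this count equals n when v = 0 and is at most 4 for every other v ∈ Fₙ, where δ(v,w) := min(d(v,w), n − d(v,w)) and d is the Hamming distance. -/
import Mathlib
set_option maxHeartbeats 3000000


/-- Indicator vector of the set of labels {i, i+1, …, j−1}, coordinates labelled 1,…,n. -/
def stdVec (n i j : ℕ) : Fin n → ZMod 2 :=
  fun k => if i ≤ k.val + 1 ∧ k.val + 1 < j then 1 else 0

/-- δ(v,w) = min(d(v,w), n − d(v,w)), where d is the Hamming distance. -/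
def hdelta {n : ℕ} (v w : Fin n → ZMod 2) : ℕ :=
  min (hammingDist v w) (n - hammingDist v w)

/-- The standard family Fₙ: the zero vector together with the vectors v_{i,j}
for 1 ≤ i < j ≤ n. -/
def stdFamily (n : ℕ) : Finset (Fin n → ZMod 2) :=
  insert 0 ((((Finset.Icc 1 n) ×ˢ (Finset.Icc 1 n)).filter fun p => p.1 < p.2).image
    fun p => stdVec n p.1 p.2)

lemma stdVec_ne_iff {n : ℕ} (a b i j : ℕ) (k : Fin n) :
    stdVec n a b k ≠ stdVec n i j k ↔
      ¬((a ≤ k.val + 1 ∧ k.val + 1 < b) ↔ (i ≤ k.val + 1 ∧ k.val + 1 < j)) := by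
  simp only [stdVec]
  by_cases h1 : a ≤ k.val + 1 ∧ k.val + 1 < b <;>
    by_cases h2 : i ≤ k.val + 1 ∧ k.val + 1 < j <;>
      simp [h1, h2]

lemma hd_eq (n a b i j : ℕ) (ha : 1 ≤ a) (hb : b ≤ n) (hi : 1 ≤ i) (hj : j ≤ n) :
    hammingDist (stdVec n a b) (stdVec n i j) =
      (b - a) + (j - i) - 2 * (min b j - max a i) := by
  have key : hammingDist (stdVec n a b) (stdVec n i j) =
      ((Finset.Ico a b ∪ Finset.Ico i j) \ (Finset.Ico a b ∩ Finset.Ico i j)).card := by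
    unfold hammingDist
    apply Finset.card_bij' (fun k _ => k.val + 1)
      (fun m hm => (⟨m - 1, by
        simp only [Finset.mem_sdiff, Finset.mem_union, Finset.mem_inter, Finset.mem_Ico] at hm
        omega⟩ : Fin n))
    case hi =>
      intro k hk
      simp only [Finset.mem_filter, Finset.mem_univ, true_and, stdVec_ne_iff] at hk
      simp only [Finset.mem_sdiff, Finset.mem_union, Finset.mem_inter, Finset.mem_Ico]
      tauto
    case hj =>
      intro m hm
      simp only [Finset.mem_sdiff, Finset.mem_union, Finset.mem_inter, Finset.mem_Ico] at hm
      simp only [Finset.mem_filter, Finset.mem_univ, true_and, stdVec_ne_iff, Fin.val_mk]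
      omega
    case left_inv =>
      intro k hk
      simp
    case right_inv =>
      intro m hm
      simp only [Finset.mem_sdiff, Finset.mem_union, Finset.mem_inter, Finset.mem_Ico] at hm
      simp only [Fin.val_mk]
      omega
  rw [key, Finset.card_sdiff_of_subset (Finset.inter_subset_union)]
  have h1 := Finset.card_union_add_card_inter (Finset.Ico a b) (Finset.Ico i j)
  rw [Finset.Ico_inter_Ico] at h1 ⊢
  simp only [Nat.card_Ico] at h1 ⊢
  omega

def Pairs (n : ℕ) : Finset (ℕ × ℕ) :=
  insert (1,1) (((Finset.Icc 1 n) ×ˢ (Finset.Icc 1 n)).filter fun p => p.1 < p.2)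

lemma mem_Pairs {n i j : ℕ} :
    (i, j) ∈ Pairs n ↔ ((i = 1 ∧ j = 1) ∨ (1 ≤ i ∧ i < j ∧ j ≤ n)) := by
  simp only [Pairs, Finset.mem_insert, Finset.mem_filter, Finset.mem_product,
    Finset.mem_Icc, Prod.mk.injEq]
  omega

lemma stdVec_one_one (n : ℕ) : stdVec n 1 1 = 0 := by
  funext k
  simp [stdVec]

lemma stdFamily_eq (n : ℕ) :
    stdFamily n = (Pairs n).image fun p => stdVec n p.1 p.2 := by
  rw [Pairs, Finset.image_insert, stdVec_one_one]
  rfl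

lemma stdVec_inj {n a b i j : ℕ} (hn : 1 ≤ n) (h1 : (a,b) ∈ Pairs n) (h2 : (i,j) ∈ Pairs n)
    (h : stdVec n a b = stdVec n i j) : a = i ∧ b = j := by
  rw [mem_Pairs] at h1 h2
  have h0 : hammingDist (stdVec n a b) (stdVec n i j) = 0 := by
    rw [h, hammingDist_self]
  rw [hd_eq n a b i j (by omega) (by omega) (by omega) (by omega)] at h0
  omega

lemma count_eq (n a b : ℕ) (hn : 1 ≤ n) (hab : (a,b) ∈ Pairs n) :
    ((stdFamily n).filter fun w => hdelta (stdVec n a b) w = 1).card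
      = ((Pairs n).filter fun p => hdelta (stdVec n a b) (stdVec n p.1 p.2) = 1).card := by
  rw [stdFamily_eq, Finset.filter_image]
  apply Finset.card_image_of_injOn
  intro p hp q hq h
  obtain ⟨i, j⟩ := p
  obtain ⟨k, l⟩ := q
  have := stdVec_inj hn (Finset.mem_of_mem_filter _ hp) (Finset.mem_of_mem_filter _ hq) h
  simp only [Prod.mk.injEq]
  exact this

lemma card_four {α : Type*} [DecidableEq α] (x y z w : α) :
    ({x, y, z, w} : Finset α).card ≤ 4 := by
  apply le_trans (Finset.card_insert_le _ _)
  apply Nat.succ_le_succ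
  apply le_trans (Finset.card_insert_le _ _)
  apply Nat.succ_le_succ
  apply le_trans (Finset.card_insert_le _ _)
  simp

lemma subset_card4 {n a b : ℕ} (hn : 6 ≤ n) (ha : 1 ≤ a) (hab : a < b) (hb : b ≤ n)
    (p1 p2 p3 p4 : ℕ × ℕ)
    (h : ∀ i j, ((i = 1 ∧ j = 1) ∨ (1 ≤ i ∧ i < j ∧ j ≤ n)) →
      (min ((b-a)+(j-i)-2*(min b j - max a i)) (n - ((b-a)+(j-i)-2*(min b j - max a i))) = 1) →
      (i,j) = p1 ∨ (i,j) = p2 ∨ (i,j) = p3 ∨ (i,j) = p4) :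
    ((Pairs n).filter fun p => hdelta (stdVec n a b) (stdVec n p.1 p.2) = 1).card ≤ 4 := by
  refine le_trans (Finset.card_le_card ?_) (card_four p1 p2 p3 p4)
  intro ⟨i, j⟩ hp
  rw [Finset.mem_filter] at hp
  obtain ⟨hm, hd⟩ := hp
  rw [mem_Pairs] at hm
  rw [hdelta, hd_eq n a b i j (by omega) (by omega) (by omega) (by omega)] at hd
  simpa only [Finset.mem_insert, Finset.mem_singleton] using h i j hm hd

lemma pairs_count_le4 {n a b : ℕ} (hn : 6 ≤ n) (ha : 1 ≤ a) (hlt : a < b) (hb : b ≤ n) :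
    ((Pairs n).filter fun p => hdelta (stdVec n a b) (stdVec n p.1 p.2) = 1).card ≤ 4 := by
  rcases eq_or_ne a 1 with ha1 | ha1 <;> rcases eq_or_ne b n with hbn | hbn <;>
    rcases eq_or_ne b (a+1) with hba | hba
  · exact subset_card4 hn ha hlt hb (1,1) (1,1) (1,1) (1,1)
      (by
        intro i j hm hd
        simp only [Prod.mk.injEq]
        generalize hD : (b-a)+(j-i)-2*(min b j - max a i) = D at hd
        have hD2 : D = 1 ∨ D = n - 1 := by omega
        clear hd
        rcases hD2 with rfl | rfl <;>
        rcases le_total b j with h1 | h1 <;> rcases le_total a i with h2 | h2 <;>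
          [rw [min_eq_left h1, max_eq_right h2] at hD; rw [min_eq_left h1, max_eq_left h2] at hD;
           rw [min_eq_right h1, max_eq_right h2] at hD; rw [min_eq_right h1, max_eq_left h2] at hD;
           rw [min_eq_left h1, max_eq_right h2] at hD; rw [min_eq_left h1, max_eq_left h2] at hD;
           rw [min_eq_right h1, max_eq_right h2] at hD; rw [min_eq_right h1, max_eq_left h2] at hD] <;>
          omega)
  · exact subset_card4 hn ha hlt hb (1,1) (2,n) (1,n-1) (1,n-1)
      (by
        intro i j hm hd
        simp only [Prod.mk.injEq]
        generalize hD : (b-a)+(j-i)-2*(min b j - max a i) = D at hd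
        have hD2 : D = 1 ∨ D = n - 1 := by omega
        clear hd
        rcases hD2 with rfl | rfl <;>
        rcases le_total b j with h1 | h1 <;> rcases le_total a i with h2 | h2 <;>
          [rw [min_eq_left h1, max_eq_right h2] at hD; rw [min_eq_left h1, max_eq_left h2] at hD;
           rw [min_eq_right h1, max_eq_right h2] at hD; rw [min_eq_right h1, max_eq_left h2] at hD;
           rw [min_eq_left h1, max_eq_right h2] at hD; rw [min_eq_left h1, max_eq_left h2] at hD;
           rw [min_eq_right h1, max_eq_right h2] at hD; rw [min_eq_right h1, max_eq_left h2] at hD] <;>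
          omega)
  · exact subset_card4 hn ha hlt hb (1,1) (1,3) (2,n) (2,n)
      (by
        intro i j hm hd
        simp only [Prod.mk.injEq]
        generalize hD : (b-a)+(j-i)-2*(min b j - max a i) = D at hd
        have hD2 : D = 1 ∨ D = n - 1 := by omega
        clear hd
        rcases hD2 with rfl | rfl <;>
        rcases le_total b j with h1 | h1 <;> rcases le_total a i with h2 | h2 <;>
          [rw [min_eq_left h1, max_eq_right h2] at hD; rw [min_eq_left h1, max_eq_left h2] at hD;
           rw [min_eq_right h1, max_eq_right h2] at hD; rw [min_eq_right h1, max_eq_left h2] at hD;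
           rw [min_eq_left h1, max_eq_right h2] at hD; rw [min_eq_left h1, max_eq_left h2] at hD;
           rw [min_eq_right h1, max_eq_right h2] at hD; rw [min_eq_right h1, max_eq_left h2] at hD] <;>
          omega)
  · exact subset_card4 hn ha hlt hb (1,b-1) (1,b+1) (2,b) (b,n)
      (by
        intro i j hm hd
        simp only [Prod.mk.injEq]
        generalize hD : (b-a)+(j-i)-2*(min b j - max a i) = D at hd
        have hD2 : D = 1 ∨ D = n - 1 := by omega
        clear hd
        rcases hD2 with rfl | rfl <;>
        rcases le_total b j with h1 | h1 <;> rcases le_total a i with h2 | h2 <;>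
          [rw [min_eq_left h1, max_eq_right h2] at hD; rw [min_eq_left h1, max_eq_left h2] at hD;
           rw [min_eq_right h1, max_eq_right h2] at hD; rw [min_eq_right h1, max_eq_left h2] at hD;
           rw [min_eq_left h1, max_eq_right h2] at hD; rw [min_eq_left h1, max_eq_left h2] at hD;
           rw [min_eq_right h1, max_eq_right h2] at hD; rw [min_eq_right h1, max_eq_left h2] at hD] <;>
          omega)
  · exact subset_card4 hn ha hlt hb (a-1,n) (1,1) (1,a) (1,a)
      (by
        intro i j hm hd
        simp only [Prod.mk.injEq]
        generalize hD : (b-a)+(j-i)-2*(min b j - max a i) = D at hd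
        have hD2 : D = 1 ∨ D = n - 1 := by omega
        clear hd
        rcases hD2 with rfl | rfl <;>
        rcases le_total b j with h1 | h1 <;> rcases le_total a i with h2 | h2 <;>
          [rw [min_eq_left h1, max_eq_right h2] at hD; rw [min_eq_left h1, max_eq_left h2] at hD;
           rw [min_eq_right h1, max_eq_right h2] at hD; rw [min_eq_right h1, max_eq_left h2] at hD;
           rw [min_eq_left h1, max_eq_right h2] at hD; rw [min_eq_left h1, max_eq_left h2] at hD;
           rw [min_eq_right h1, max_eq_right h2] at hD; rw [min_eq_right h1, max_eq_left h2] at hD] <;>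
          omega)
  · exact subset_card4 hn ha hlt hb (a-1,n) (a+1,n) (a,n-1) (1,a)
      (by
        intro i j hm hd
        simp only [Prod.mk.injEq]
        generalize hD : (b-a)+(j-i)-2*(min b j - max a i) = D at hd
        have hD2 : D = 1 ∨ D = n - 1 := by omega
        clear hd
        rcases hD2 with rfl | rfl <;>
        rcases le_total b j with h1 | h1 <;> rcases le_total a i with h2 | h2 <;>
          [rw [min_eq_left h1, max_eq_right h2] at hD; rw [min_eq_left h1, max_eq_left h2] at hD;
           rw [min_eq_right h1, max_eq_right h2] at hD; rw [min_eq_right h1, max_eq_left h2] at hD;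
           rw [min_eq_left h1, max_eq_right h2] at hD; rw [min_eq_left h1, max_eq_left h2] at hD;
           rw [min_eq_right h1, max_eq_right h2] at hD; rw [min_eq_right h1, max_eq_left h2] at hD] <;>
          omega)
  · exact subset_card4 hn ha hlt hb (a-1,b) (a,b+1) (1,1) (1,1)
      (by
        intro i j hm hd
        simp only [Prod.mk.injEq]
        generalize hD : (b-a)+(j-i)-2*(min b j - max a i) = D at hd
        have hD2 : D = 1 ∨ D = n - 1 := by omega
        clear hd
        rcases hD2 with rfl | rfl <;>
        rcases le_total b j with h1 | h1 <;> rcases le_total a i with h2 | h2 <;>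
          [rw [min_eq_left h1, max_eq_right h2] at hD; rw [min_eq_left h1, max_eq_left h2] at hD;
           rw [min_eq_right h1, max_eq_right h2] at hD; rw [min_eq_right h1, max_eq_left h2] at hD;
           rw [min_eq_left h1, max_eq_right h2] at hD; rw [min_eq_left h1, max_eq_left h2] at hD;
           rw [min_eq_right h1, max_eq_right h2] at hD; rw [min_eq_right h1, max_eq_left h2] at hD] <;>
          omega)
  · exact subset_card4 hn ha hlt hb (a-1,b) (a+1,b) (a,b-1) (a,b+1)
      (by
        intro i j hm hd
        simp only [Prod.mk.injEq]
        generalize hD : (b-a)+(j-i)-2*(min b j - max a i) = D at hd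
        have hD2 : D = 1 ∨ D = n - 1 := by omega
        clear hd
        rcases hD2 with rfl | rfl <;>
        rcases le_total b j with h1 | h1 <;> rcases le_total a i with h2 | h2 <;>
          [rw [min_eq_left h1, max_eq_right h2] at hD; rw [min_eq_left h1, max_eq_left h2] at hD;
           rw [min_eq_right h1, max_eq_right h2] at hD; rw [min_eq_right h1, max_eq_left h2] at hD;
           rw [min_eq_left h1, max_eq_right h2] at hD; rw [min_eq_left h1, max_eq_left h2] at hD;
           rw [min_eq_right h1, max_eq_right h2] at hD; rw [min_eq_right h1, max_eq_left h2] at hD] <;>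
          omega)

theorem stmt_13 (n : ℕ) (hn : 6 ≤ n) :
    (¬ ∃ v ∈ stdFamily n,
        ((stdFamily n).filter fun w => hdelta v w = 1).card = n - 1) ∧
    ((stdFamily n).filter fun w => hdelta (0 : Fin n → ZMod 2) w = 1).card = n ∧
    (∀ v ∈ stdFamily n, v ≠ 0 →
        ((stdFamily n).filter fun w => hdelta v w = 1).card ≤ 4) := by
  have h11 : ((1:ℕ),(1:ℕ)) ∈ Pairs n := by rw [mem_Pairs]; omega
  have P2 : ((stdFamily n).filter fun w => hdelta (0 : Fin n → ZMod 2) w = 1).card = n := by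
    rw [← stdVec_one_one n, count_eq n 1 1 (by omega) h11]
    have hQ : ((Pairs n).filter fun p => hdelta (stdVec n 1 1) (stdVec n p.1 p.2) = 1)
        = insert (1, n) ((Finset.Icc 1 (n-1)).image fun i => (i, i+1)) := by
      ext ⟨i, j⟩
      simp only [Finset.mem_filter, Finset.mem_insert, Finset.mem_image, Finset.mem_Icc,
        Prod.mk.injEq]
      constructor
      · rintro ⟨hp, hd⟩
        rw [mem_Pairs] at hp
        rw [hdelta, hd_eq n 1 1 i j (by omega) (by omega) (by omega) (by omega)] at hd
        have : (i = 1 ∧ j = n) ∨ (j = i + 1 ∧ 1 ≤ i ∧ i ≤ n - 1) := by omega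
        rcases this with h | h
        · exact Or.inl ⟨h.1, h.2⟩
        · exact Or.inr ⟨i, ⟨h.2.1, h.2.2⟩, rfl, h.1.symm⟩
      · rintro (⟨h1, h2⟩ | ⟨x, hx, h1, h2⟩) <;>
          refine ⟨by rw [mem_Pairs]; omega, ?_⟩ <;>
            rw [hdelta, hd_eq n 1 1 i j (by omega) (by omega) (by omega) (by omega)] <;>
              omega
    rw [hQ]
    rw [Finset.card_insert_of_notMem, Finset.card_image_of_injective _
      (fun x y h => by simpa using congrArg Prod.fst h)]
    · rw [Nat.card_Icc]; omega
    · simp only [Finset.mem_image, Finset.mem_Icc, Prod.mk.injEq, not_exists]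
      intro x hx
      omega
  have P3 : ∀ v ∈ stdFamily n, v ≠ 0 →
      ((stdFamily n).filter fun w => hdelta v w = 1).card ≤ 4 := by
    intro v hv hv0
    rw [stdFamily_eq] at hv
    obtain ⟨⟨a, b⟩, hab, rfl⟩ := Finset.mem_image.mp hv
    have hab' := mem_Pairs.mp hab
    have hlt : a < b := by
      rcases hab' with ⟨rfl, rfl⟩ | h
      · exact absurd (stdVec_one_one n) hv0
      · exact h.2.1
    have ha : 1 ≤ a := by omega
    have hb : b ≤ n := by omega
    rw [count_eq n a b (by omega) hab]
    exact pairs_count_le4 hn ha hlt hb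
  refine ⟨?_, P2, P3⟩
  rintro ⟨v, hv, hc⟩
  by_cases hv0 : v = 0
  · subst hv0
    omega
  · have := P3 v hv hv0
    omega
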